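/- Let D = {z ∈ ℂ : |z| < 1} be the Poincaré disk with hyperbolic metric dist(z,w) = arctanh |(z − w)/(1 − z̄w)| (up to the standard normalization). For any two distinct points x, y on the unit circle, the hyperbolic midpoint m(r) of the points rx and ry (the unique point of D equidistant from rx and ry lying on the hyperbolic segment joining them) converges, as r → 1⁻ along (0,1), to a point of the open disk D. -/

import Mathlib

open Set Filter Topology Complex

/-- The inverse hyperbolic tangent. -/
noncomputable def arctanh (t : ℝ) : ℝ := (1 / 2) * Real.log ((1 + t) / (1 - t))

/-- The hyperbolic distance in the Poincaré disk model. -/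
noncomputable def poincareDist (z w : ℂ) : ℝ :=
  arctanh (‖(z - w) / (1 - (starRingEnd ℂ) z * w)‖)



lemma arctanh_strictMono {u v : ℝ} (hu : 0 ≤ u) (huv : u < v) (hv : v < 1) :
    arctanh u < arctanh v := by
  unfold arctanh
  have h1 : (0:ℝ) < (1 + u) / (1 - u) := by
    apply div_pos <;> nlinarith
  have h2 : (1 + u) / (1 - u) < (1 + v) / (1 - v) := by
    rw [div_lt_div_iff₀ (by nlinarith) (by nlinarith)]
    nlinarith
  have := Real.log_lt_log h1 h2
  linarith

lemma arctanh_inj {u v : ℝ} (hu : 0 ≤ u) (hu1 : u < 1) (hv : 0 ≤ v) (hv1 : v < 1)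
    (h : arctanh u = arctanh v) : u = v := by
  rcases lt_trichotomy u v with h' | h' | h'
  · exact absurd h (ne_of_lt (arctanh_strictMono hu h' hv1))
  · exact h'
  · exact absurd h.symm (ne_of_lt (arctanh_strictMono hv h' hu1))

lemma arctanh_double {t : ℝ} (ht : 0 ≤ t) (ht1 : t < 1) :
    arctanh t + arctanh t = arctanh (2 * t / (1 + t ^ 2)) := by
  unfold arctanh
  have h1 : (0:ℝ) < 1 - t := by linarith
  have h2 : (0:ℝ) < 1 + t := by linarith
  have h3 : (0:ℝ) < 1 + t ^ 2 := by positivity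
  have e1 : (1 + 2 * t / (1 + t ^ 2)) / (1 - 2 * t / (1 + t ^ 2))
      = ((1 + t) / (1 - t)) ^ 2 := by
    have h4 : (0:ℝ) < 1 - 2 * t / (1 + t ^ 2) := by
      rw [sub_pos, div_lt_one h3]; nlinarith [sq_nonneg (1 - t)]
    have h5 : (0:ℝ) < (1 - t) ^ 2 := by positivity
    rw [div_pow]
    rw [div_eq_div_iff (ne_of_gt h4) (ne_of_gt h5)]
    field_simp
    ring
  rw [e1, Real.log_pow]
  ring

lemma normSq_identity (z w : ℂ) :
    Complex.normSq (1 - (starRingEnd ℂ) z * w) - Complex.normSq (z - w)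
      = (1 - Complex.normSq z) * (1 - Complex.normSq w) := by
  have h : ((Complex.normSq (1 - (starRingEnd ℂ) z * w) - Complex.normSq (z - w) : ℝ) : ℂ)
      = ((1 - Complex.normSq z) * (1 - Complex.normSq w) : ℝ) := by
    push_cast
    simp only [← Complex.mul_conj]
    simp only [map_sub, map_mul, map_one, Complex.conj_conj]
    ring
  exact_mod_cast h

lemma pseudo_lt_one {z w : ℂ} (hz : ‖z‖ < 1) (hw : ‖w‖ < 1) :
    ‖(z - w) / (1 - (starRingEnd ℂ) z * w)‖ < 1 := by
  have hzw : ‖(starRingEnd ℂ) z * w‖ < 1 := by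
    rw [norm_mul, Complex.norm_conj]
    nlinarith [norm_nonneg z, norm_nonneg w]
  have hne : (1 : ℂ) - (starRingEnd ℂ) z * w ≠ 0 := by
    intro h
    have : (starRingEnd ℂ) z * w = 1 := by linear_combination -h
    rw [this] at hzw; simp at hzw
  have hpos : 0 < ‖1 - (starRingEnd ℂ) z * w‖ := by
    rwa [norm_pos_iff]
  rw [norm_div, div_lt_one hpos]
  have hid := normSq_identity z w
  have hz2 : Complex.normSq z < 1 := by
    rw [← Complex.sq_norm]; nlinarith [norm_nonneg z]
  have hw2 : Complex.normSq w < 1 := by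
    rw [← Complex.sq_norm]; nlinarith [norm_nonneg w]
  have h1 : (1 - Complex.normSq z) * (1 - Complex.normSq w) > 0 :=
    mul_pos (by linarith) (by linarith)
  have h2 : Complex.normSq (z - w) < Complex.normSq (1 - (starRingEnd ℂ) z * w) := by
    linarith
  have := Complex.sq_norm (z - w)
  have := Complex.sq_norm (1 - (starRingEnd ℂ) z * w)
  nlinarith [norm_nonneg (z - w), norm_nonneg (1 - (starRingEnd ℂ) z * w)]

lemma key_identity (z w : ℂ) :
    Complex.normSq (z - w) * (1 - ‖z‖ * ‖w‖) ^ 2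
      - (‖w‖ - ‖z‖) ^ 2 * Complex.normSq (1 - (starRingEnd ℂ) z * w)
      = 2 * (1 - (‖z‖) ^ 2) * (1 - (‖w‖) ^ 2)
          * (‖z‖ * ‖w‖ - ((starRingEnd ℂ) z * w).re) := by
  have h1 : Complex.normSq (z - w)
      = (‖z‖) ^ 2 + (‖w‖) ^ 2 - 2 * ((starRingEnd ℂ) z * w).re := by
    rw [Complex.normSq_sub, Complex.sq_norm, Complex.sq_norm]
    congr 1
    rw [show z * (starRingEnd ℂ) w = (starRingEnd ℂ) ((starRingEnd ℂ) z * w) by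
      simp only [map_mul, Complex.conj_conj], Complex.conj_re]
  have h2 : Complex.normSq (1 - (starRingEnd ℂ) z * w)
      = 1 - 2 * ((starRingEnd ℂ) z * w).re + (‖z‖) ^ 2 * (‖w‖) ^ 2 := by
    rw [Complex.normSq_sub, Complex.normSq_one, Complex.normSq_mul, Complex.normSq_conj,
      Complex.sq_norm, Complex.sq_norm, one_mul, Complex.conj_re]
    ring
  rw [h1, h2]
  ring

lemma eq_re_of_re_eq_abs {v : ℂ} (h : v.re = ‖v‖) : v = ((v.re : ℝ) : ℂ) := by
  have hsq := Complex.sq_norm v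
  rw [Complex.normSq_apply] at hsq
  rw [← h] at hsq
  have him : v.im = 0 := by nlinarith [sq_nonneg v.im]
  exact Complex.ext rfl him

lemma one_add_ne_zero {v : ℂ} (h : ‖v‖ < 1) : (1 : ℂ) + v ≠ 0 := by
  intro h0
  have : v = -1 := by linear_combination h0
  rw [this] at h; simp at h

lemma one_sub_ne_zero {v : ℂ} (h : ‖v‖ < 1) : (1 : ℂ) - v ≠ 0 := by
  have := one_add_ne_zero (v := -v) (by simpa using h)
  simpa [sub_eq_add_neg] using this

lemma abs_one_sub_conj_comm (z w : ℂ) :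
    ‖1 - (starRingEnd ℂ) z * w‖ = ‖1 - (starRingEnd ℂ) w * z‖ := by
  rw [← Complex.norm_conj (1 - (starRingEnd ℂ) z * w)]
  congr 1
  simp only [map_sub, map_one, map_mul, Complex.conj_conj]
  ring

set_option maxHeartbeats 1000000 in
lemma midpoint_formula (x y : ℂ) (hx : ‖x‖ = 1) (hy : ‖y‖ = 1)
    (hxy : x ≠ y) (r : ℝ) (hr0 : 0 < r) (hr1 : r < 1) (m' : ℂ) (hm1 : ‖m'‖ < 1)
    (hm2 : poincareDist ((r : ℂ) * x) m' = poincareDist m' ((r : ℂ) * y))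
    (hm3 : poincareDist ((r : ℂ) * x) m' + poincareDist m' ((r : ℂ) * y)
      = poincareDist ((r : ℂ) * x) ((r : ℂ) * y))
    (μ : ℝ)
    (hμdef : μ * (r ^ 2 * (‖x - y‖) ^ 2)
      = ‖1 - (r : ℂ) ^ 2 * ((starRingEnd ℂ) x * y)‖ - (1 - r ^ 2)) :
    m' * (1 + (r : ℂ) ^ 2 * (μ : ℂ) * (1 - (starRingEnd ℂ) x * y))
      = (r : ℂ) * ((μ : ℂ) * x + (1 - (μ : ℂ)) * y) := by
  have hxc : x * (starRingEnd ℂ) x = 1 := by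
    rw [Complex.mul_conj, Complex.normSq_eq_norm_sq, hx]; norm_num
  have hyc : y * (starRingEnd ℂ) y = 1 := by
    rw [Complex.mul_conj, Complex.normSq_eq_norm_sq, hy]; norm_num
  set a : ℂ := (r : ℂ) * x with ha_def
  set b : ℂ := (r : ℂ) * y with hb_def
  have habsa : ‖a‖ = r := by
    rw [ha_def, norm_mul, Complex.norm_real, Real.norm_eq_abs, hx, abs_of_pos hr0, mul_one]
  have habsb : ‖b‖ = r := by
    rw [hb_def, norm_mul, Complex.norm_real, Real.norm_eq_abs, hy, abs_of_pos hr0, mul_one]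
  have ha1 : ‖a‖ < 1 := by rw [habsa]; exact hr1
  have hb1 : ‖b‖ < 1 := by rw [habsb]; exact hr1
  set A : ℂ := (m' - a) / (1 - (starRingEnd ℂ) a * m') with hA_def
  set B : ℂ := (b - a) / (1 - (starRingEnd ℂ) a * b) with hB_def
  set t : ℝ := ‖A‖ with ht_def
  set s : ℝ := ‖B‖ with hs_def
  set ρ : ℝ := ‖(m' - b) / (1 - (starRingEnd ℂ) m' * b)‖ with hρ_def
  -- nonzero denominators
  have hd1 : (1 : ℂ) - (starRingEnd ℂ) a * m' ≠ 0 := by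
    apply one_sub_ne_zero
    rw [norm_mul, Complex.norm_conj, habsa]
    nlinarith only [norm_nonneg m', hr0, hr1, hm1]
  have hd2 : (1 : ℂ) - (starRingEnd ℂ) a * b ≠ 0 := by
    apply one_sub_ne_zero
    rw [norm_mul, Complex.norm_conj, habsa, habsb]
    nlinarith only [hr0, hr1]
  have hd3 : (1 : ℂ) - (starRingEnd ℂ) m' * b ≠ 0 := by
    apply one_sub_ne_zero
    rw [norm_mul, Complex.norm_conj, habsb]
    nlinarith only [norm_nonneg m', hr0, hr1, hm1]
  have hd1' : (1 : ℂ) - a * (starRingEnd ℂ) m' ≠ 0 := by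
    apply one_sub_ne_zero
    rw [norm_mul, habsa, Complex.norm_conj]
    nlinarith only [norm_nonneg m', hr0, hr1, hm1]
  -- bounds
  have ht0 : 0 ≤ t := norm_nonneg A
  have hs0 : 0 ≤ s := norm_nonneg B
  have hρ0 : 0 ≤ ρ := norm_nonneg _
  have ht1 : t < 1 := by
    have h := pseudo_lt_one hm1 ha1
    rw [norm_div] at h
    have e : t = ‖m' - a‖ / ‖1 - (starRingEnd ℂ) a * m'‖ := by
      rw [ht_def, hA_def, norm_div]
    rw [e, abs_one_sub_conj_comm a m']
    exact h
  have hρ1 : ρ < 1 := pseudo_lt_one hm1 hb1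
  have hs1 : s < 1 := by
    have h := pseudo_lt_one ha1 hb1
    rw [norm_div] at h
    have e : s = ‖b - a‖ / ‖1 - (starRingEnd ℂ) a * b‖ := by
      rw [hs_def, hB_def, norm_div]
    rw [e, norm_sub_rev b a]
    exact h
  -- distances as arctanh
  have hpd1 : poincareDist a m' = arctanh t := by
    unfold poincareDist
    congr 1
    rw [ht_def, hA_def, norm_div, norm_div, norm_sub_rev a m']
  have hpd2 : poincareDist m' b = arctanh ρ := rfl
  have hpd3 : poincareDist a b = arctanh s := by
    unfold poincareDist
    congr 1
    rw [hs_def, hB_def, norm_div, norm_div, norm_sub_rev a b]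
  have hρt : ρ = t := by
    apply arctanh_inj hρ0 hρ1 ht0 ht1
    rw [← hpd1, ← hpd2]; exact hm2.symm
  have hs2t : s * (1 + t ^ 2) = 2 * t := by
    have h2 : arctanh s = arctanh (2 * t / (1 + t ^ 2)) := by
      rw [← hpd3, ← hm3, hpd1, hpd2, hρt, arctanh_double ht0 ht1]
    have hlt : 2 * t / (1 + t ^ 2) < 1 := by
      rw [div_lt_one (by positivity)]
      have h0 : 0 < (1 - t) ^ 2 := pow_pos (by linarith only [ht1]) 2
      nlinarith only [h0]
    have h3 := arctanh_inj hs0 hs1 (by positivity) hlt h2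
    rw [h3]; field_simp
  -- Möbius invariance
  have haa : (1 : ℂ) - a * (starRingEnd ℂ) a = ((1 - r ^ 2 : ℝ) : ℂ) := by
    rw [Complex.mul_conj, Complex.normSq_eq_norm_sq, habsa]; push_cast; ring
  have e1 : A - B = ((m' - b) * ((1 - r ^ 2 : ℝ) : ℂ))
      / ((1 - (starRingEnd ℂ) a * m') * (1 - (starRingEnd ℂ) a * b)) := by
    rw [hA_def, hB_def, div_sub_div _ _ hd1 hd2, ← haa]
    congr 1; ring
  have hconjA : (starRingEnd ℂ) A = ((starRingEnd ℂ) m' - (starRingEnd ℂ) a)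
      / (1 - a * (starRingEnd ℂ) m') := by
    rw [hA_def, map_div₀]
    congr 1 <;> simp only [map_sub, map_one, map_mul, Complex.conj_conj]
  have e2 : 1 - (starRingEnd ℂ) A * B = ((1 - (starRingEnd ℂ) m' * b) * ((1 - r ^ 2 : ℝ) : ℂ))
      / ((1 - a * (starRingEnd ℂ) m') * (1 - (starRingEnd ℂ) a * b)) := by
    rw [hconjA, hB_def, div_mul_div_comm, ← haa]
    rw [eq_div_iff (mul_ne_zero hd1' hd2), sub_mul, one_mul,
      div_mul_cancel₀ _ (mul_ne_zero hd1' hd2)]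
    ring
  have hnum3 : ‖m' - b‖ = t * ‖1 - (starRingEnd ℂ) m' * b‖ := by
    have e : ρ = ‖m' - b‖ / ‖1 - (starRingEnd ℂ) m' * b‖ := by
      rw [hρ_def, norm_div]
    have hne : ‖1 - (starRingEnd ℂ) m' * b‖ ≠ 0 := norm_ne_zero_iff.mpr hd3
    rw [← hρt, e, div_mul_cancel₀ _ hne]
  have hcomm' : ‖1 - a * (starRingEnd ℂ) m'‖
      = ‖1 - (starRingEnd ℂ) a * m'‖ := by
    rw [show (1 : ℂ) - a * (starRingEnd ℂ) m' = 1 - (starRingEnd ℂ) m' * a by ring,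
      abs_one_sub_conj_comm m' a]
  have hr2pos : (0:ℝ) < 1 - r ^ 2 := by nlinarith only [hr0, hr1]
  have habs1 : ‖A - B‖ = (‖m' - b‖ * (1 - r ^ 2))
      / (‖1 - (starRingEnd ℂ) a * m'‖ * ‖1 - (starRingEnd ℂ) a * b‖) := by
    rw [e1, norm_div, norm_mul, norm_mul, Complex.norm_real, Real.norm_eq_abs,
      abs_of_pos hr2pos]
  have habs2 : ‖1 - (starRingEnd ℂ) A * B‖
      = (‖1 - (starRingEnd ℂ) m' * b‖ * (1 - r ^ 2))
      / (‖1 - (starRingEnd ℂ) a * m'‖ * ‖1 - (starRingEnd ℂ) a * b‖) := by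
    rw [e2, norm_div, norm_mul, norm_mul, Complex.norm_real, Real.norm_eq_abs,
      abs_of_pos hr2pos, hcomm']
  have habsAB : ‖A - B‖ = t * ‖1 - (starRingEnd ℂ) A * B‖ := by
    rw [habs1, habs2, hnum3]; ring
  -- equality case
  have hnormeq : Complex.normSq (A - B)
      = t ^ 2 * Complex.normSq (1 - (starRingEnd ℂ) A * B) := by
    rw [← Complex.sq_norm, ← Complex.sq_norm, habsAB]; ring
  have hK := key_identity A B
  rw [← ht_def, ← hs_def] at hK
  have htt : t ^ 2 * (1 - t * s) ^ 2 = (s - t) ^ 2 := by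
    linear_combination (s * (t ^ 2 - 1)) * hs2t
  have hzero : 2 * (1 - t ^ 2) * (1 - s ^ 2)
      * (t * s - ((starRingEnd ℂ) A * B).re) = 0 := by
    linear_combination (-1 : ℝ) * hK + (1 - t * s) ^ 2 * hnormeq
      + Complex.normSq (1 - (starRingEnd ℂ) A * B) * htt
  have hre : ((starRingEnd ℂ) A * B).re = t * s := by
    have hfac : (0 : ℝ) < 2 * (1 - t ^ 2) * (1 - s ^ 2) := by
      have h1 : (0:ℝ) < 1 - t ^ 2 := by nlinarith only [ht0, ht1]
      have h2 : (0:ℝ) < 1 - s ^ 2 := by nlinarith only [hs0, hs1]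
      exact mul_pos (mul_pos two_pos h1) h2
    rcases mul_eq_zero.mp hzero with h | h
    · exact absurd h (ne_of_gt hfac)
    · linarith
  have habsv : ‖(starRingEnd ℂ) A * B‖ = t * s := by
    rw [norm_mul, Complex.norm_conj, ← ht_def, ← hs_def]
  have hv : (starRingEnd ℂ) A * B = ((t * s : ℝ) : ℂ) := by
    have h := eq_re_of_re_eq_abs (v := (starRingEnd ℂ) A * B) (by rw [hre, habsv])
    rw [hre] at h; exact h
  -- scalar quantities
  set N : ℝ := ‖1 - (r : ℂ) ^ 2 * ((starRingEnd ℂ) x * y)‖ with hN_def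
  have hab : (starRingEnd ℂ) a * b = (r : ℂ) ^ 2 * ((starRingEnd ℂ) x * y) := by
    rw [ha_def, hb_def, map_mul, Complex.conj_ofReal]; ring
  have habsab : ‖1 - (starRingEnd ℂ) a * b‖ = N := by rw [hab]
  have hxyne : x - y ≠ 0 := sub_ne_zero.mpr hxy
  have habsxy : 0 < ‖x - y‖ := norm_pos_iff.mpr hxyne
  have hδN : 1 - r ^ 2 ≤ N := by
    have h1 : ‖(r : ℂ) ^ 2 * ((starRingEnd ℂ) x * y)‖ = r ^ 2 := by
      rw [norm_mul, norm_mul, norm_pow, Complex.norm_real, Real.norm_eq_abs, Complex.norm_conj, hx, hy,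
        abs_of_pos hr0]; ring
    have h2 := norm_add_le (1 - (r : ℂ) ^ 2 * ((starRingEnd ℂ) x * y))
      ((r : ℂ) ^ 2 * ((starRingEnd ℂ) x * y))
    rw [sub_add_cancel, norm_one, h1] at h2
    linarith only [h2]
  have hN0 : 0 < N := lt_of_lt_of_le hr2pos hδN
  have hK2 : N ^ 2 = r ^ 2 * (‖x - y‖) ^ 2 + (1 - r ^ 2) ^ 2 := by
    have e : (N : ℝ) ^ 2 = Complex.normSq (1 - (r : ℂ) ^ 2 * ((starRingEnd ℂ) x * y)) :=
      Complex.sq_norm _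
    have e' : (‖x - y‖) ^ 2 = Complex.normSq (x - y) := Complex.sq_norm _
    rw [e, e']
    have hc : ((Complex.normSq (1 - (r : ℂ) ^ 2 * ((starRingEnd ℂ) x * y))
        - r ^ 2 * Complex.normSq (x - y) - (1 - r ^ 2) ^ 2 : ℝ) : ℂ) = 0 := by
      push_cast
      simp only [← Complex.mul_conj]
      simp only [map_sub, map_one, map_mul, map_pow, Complex.conj_conj, Complex.conj_ofReal]
      linear_combination ((r : ℂ) ^ 4 * (y * (starRingEnd ℂ) y) - (r : ℂ) ^ 2) * hxc
        + ((r : ℂ) ^ 4 - (r : ℂ) ^ 2) * hyc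
    have hr := Complex.ofReal_eq_zero.mp hc
    linarith only [hr]
  have hB0 : B ≠ 0 := by
    rw [hB_def]
    apply div_ne_zero _ hd2
    rw [hb_def, ha_def, ← mul_sub]
    exact mul_ne_zero (by exact_mod_cast ne_of_gt hr0) (sub_ne_zero.mpr (Ne.symm hxy))
  have hs0' : 0 < s := norm_pos_iff.mpr hB0
  have hsN : s * N = r * ‖x - y‖ := by
    have e : s = ‖b - a‖ / N := by rw [hs_def, hB_def, norm_div, habsab]
    have e2 : ‖b - a‖ = r * ‖x - y‖ := by
      rw [hb_def, ha_def, ← mul_sub, norm_mul, Complex.norm_real, Real.norm_eq_abs, abs_of_pos hr0,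
        norm_sub_rev y x]
    rw [e, e2, div_mul_cancel₀ _ (ne_of_gt hN0)]
  have hsN2 : (s * N) ^ 2 = (r * ‖x - y‖) ^ 2 := by rw [hsN]
  have hs2 : (1 - s ^ 2) * N ^ 2 = (1 - r ^ 2) ^ 2 := by linear_combination hK2 - hsN2
  have hst : (1 - s * t) * N = 1 - r ^ 2 := by
    have h1 : ((1 - s * t) * N) ^ 2 = (1 - r ^ 2) ^ 2 := by
      linear_combination hs2 + s * N ^ 2 * hs2t
    have h2 : 0 ≤ (1 - s * t) * N :=
      mul_nonneg (by nlinarith only [hs0, hs1, ht0, ht1]) (le_of_lt hN0)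
    have h4 : ((1 - s * t) * N - (1 - r ^ 2)) * ((1 - s * t) * N + (1 - r ^ 2)) = 0 := by
      linear_combination h1
    rcases mul_eq_zero.mp h4 with h | h
    · linarith only [h]
    · linarith only [h, h2, hr2pos]
  have hμ0 : 0 ≤ μ := by
    have hpos2 : (0:ℝ) < r ^ 2 * ‖x - y‖ ^ 2 := by positivity
    nlinarith only [hμdef, hδN, hpos2]
  have htval : t * (s * N) = N - (1 - r ^ 2) := by linear_combination (-1 : ℝ) * hst
  have htls : t = (N * μ) * s := by
    have hpos2 : (0:ℝ) < r * ‖x - y‖ := by positivity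
    apply mul_right_cancel₀ (ne_of_gt hpos2)
    calc t * (r * ‖x - y‖) = t * (s * N) := by rw [hsN]
      _ = N - (1 - r ^ 2) := htval
      _ = μ * (r ^ 2 * ‖x - y‖ ^ 2) := hμdef.symm
      _ = (N * μ) * s * (r * ‖x - y‖) := by
          linear_combination (μ * r * ‖x - y‖) * hsN.symm
  -- A = λ B
  have hts_r : t * s = (N * μ) * s ^ 2 := by rw [htls]; ring
  have hvconj : A * (starRingEnd ℂ) B = ((t * s : ℝ) : ℂ) := by
    have h := congrArg (starRingEnd ℂ) hv
    simpa only [map_mul, Complex.conj_conj, Complex.conj_ofReal, mul_comm] using h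
  have hBB : (starRingEnd ℂ) B * B = ((s ^ 2 : ℝ) : ℂ) := by
    rw [mul_comm, Complex.mul_conj, Complex.normSq_eq_norm_sq, ← hs_def]
  have hsne : ((s ^ 2 : ℝ) : ℂ) ≠ 0 := by
    exact_mod_cast ne_of_gt (by positivity : (0:ℝ) < s ^ 2)
  have hAB : A = ((N * μ : ℝ) : ℂ) * B := by
    apply mul_right_cancel₀ hsne
    calc A * ((s ^ 2 : ℝ) : ℂ) = A * ((starRingEnd ℂ) B * B) := by rw [hBB]
      _ = (A * (starRingEnd ℂ) B) * B := by ring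
      _ = ((t * s : ℝ) : ℂ) * B := by rw [hvconj]
      _ = ((N * μ : ℝ) : ℂ) * B * ((s ^ 2 : ℝ) : ℂ) := by
          rw [show ((t * s : ℝ) : ℂ) = ((N * μ : ℝ) : ℂ) * ((s ^ 2 : ℝ) : ℂ) by
            push_cast; exact_mod_cast congrArg (fun z : ℝ => (z : ℂ)) hts_r]
          ring
  -- recover m'
  have hrec : m' - a = ((N * μ : ℝ) : ℂ) * B * (1 - (starRingEnd ℂ) a * m') := by
    have h : A * (1 - (starRingEnd ℂ) a * m') = m' - a := by
      rw [hA_def]; exact div_mul_cancel₀ _ hd1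
    rw [← h, hAB]
  have hlin : m' * (1 + (starRingEnd ℂ) a * (((N * μ : ℝ) : ℂ) * B))
      = a + ((N * μ : ℝ) : ℂ) * B := by
    linear_combination hrec
  have habsu : ‖(starRingEnd ℂ) a * (((N * μ : ℝ) : ℂ) * B)‖ = r * ((N * μ) * s) := by
    rw [norm_mul ((starRingEnd ℂ) a) (((N * μ : ℝ) : ℂ) * B),
      norm_mul ((N * μ : ℝ) : ℂ) B, Complex.norm_conj, habsa,
      Complex.norm_real, Real.norm_eq_abs, ← hs_def, _root_.abs_of_nonneg (mul_nonneg (le_of_lt hN0) hμ0)]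
  have hu1 : (1 : ℂ) + (starRingEnd ℂ) a * (((N * μ : ℝ) : ℂ) * B) ≠ 0 := by
    apply one_add_ne_zero
    rw [habsu, ← htls]
    nlinarith only [hr0, hr1, ht0, ht1]
  -- lambda relation
  have hNδ : (1 - r ^ 2) < N := by
    have hp : (0:ℝ) < r ^ 2 * (‖x - y‖) ^ 2 := by positivity
    have hsq : (1 - r ^ 2) ^ 2 < N ^ 2 := by linarith only [hK2, hp]
    nlinarith only [hsq, hN0, hr2pos]
  have hreal : N * μ = 1 - (1 - r ^ 2) * μ := by
    have h1 : μ * ((N - (1 - r ^ 2)) * (N + (1 - r ^ 2))) = N - (1 - r ^ 2) := by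
      linear_combination hμdef + μ * hK2
    have h2 : (μ * (N + (1 - r ^ 2)) - 1) * (N - (1 - r ^ 2)) = 0 := by
      linear_combination h1
    rcases mul_eq_zero.mp h2 with h | h
    · linear_combination h
    · linarith only [h, hNδ]
  have hlamc : ((N * μ : ℝ) : ℂ) = 1 - ((1 - r ^ 2 : ℝ) : ℂ) * ((μ : ℝ) : ℂ) := by
    have := congrArg (fun z : ℝ => (z : ℂ)) hreal
    push_cast at this ⊢
    exact this
  -- final polynomial identity
  have hca : (starRingEnd ℂ) a = (r : ℂ) * (starRingEnd ℂ) x := by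
    rw [ha_def, map_mul, Complex.conj_ofReal]
  have hBden : B * (1 - (starRingEnd ℂ) a * b) = b - a := by
    rw [hB_def]; exact div_mul_cancel₀ _ hd2
  have hH : (a + ((N * μ : ℝ) : ℂ) * B)
        * (1 + (r : ℂ) ^ 2 * (μ : ℂ) * (1 - (starRingEnd ℂ) x * y))
        * (1 - (starRingEnd ℂ) a * b)
      = ((r : ℂ) * ((μ : ℂ) * x + (1 - (μ : ℂ)) * y))
        * (1 + (starRingEnd ℂ) a * (((N * μ : ℝ) : ℂ) * B))
        * (1 - (starRingEnd ℂ) a * b) := by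
    rw [show (a + ((N * μ : ℝ) : ℂ) * B)
        * (1 + (r : ℂ) ^ 2 * (μ : ℂ) * (1 - (starRingEnd ℂ) x * y))
        * (1 - (starRingEnd ℂ) a * b)
      = (a * (1 - (starRingEnd ℂ) a * b)
          + ((N * μ : ℝ) : ℂ) * (B * (1 - (starRingEnd ℂ) a * b)))
        * (1 + (r : ℂ) ^ 2 * (μ : ℂ) * (1 - (starRingEnd ℂ) x * y)) by ring, hBden]
    rw [show ((r : ℂ) * ((μ : ℂ) * x + (1 - (μ : ℂ)) * y))
        * (1 + (starRingEnd ℂ) a * (((N * μ : ℝ) : ℂ) * B))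
        * (1 - (starRingEnd ℂ) a * b)
      = ((r : ℂ) * ((μ : ℂ) * x + (1 - (μ : ℂ)) * y))
        * ((1 - (starRingEnd ℂ) a * b)
          + (starRingEnd ℂ) a * ((N * μ : ℝ) : ℂ) * (B * (1 - (starRingEnd ℂ) a * b))) by
      ring, hBden]
    rw [hlamc, hab, hca, ha_def, hb_def]
    push_cast
    linear_combination ((r : ℂ) ^ 3 * y * ((r : ℂ) ^ 2 * (μ : ℂ) * ((starRingEnd ℂ) x * y)
      - 1 - (r : ℂ) ^ 2 * (μ : ℂ))
      + (r : ℂ) ^ 3 * y * (1 - (μ : ℂ)) ^ 2 + (r : ℂ) ^ 5 * y * (μ : ℂ) * (1 - (μ : ℂ))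
      + (r : ℂ) ^ 3 * x * (μ : ℂ) * (1 - (μ : ℂ)) + (r : ℂ) ^ 5 * x * (μ : ℂ) ^ 2) * hxc
  have h1 : (m' * (1 + (r : ℂ) ^ 2 * (μ : ℂ) * (1 - (starRingEnd ℂ) x * y))
        - (r : ℂ) * ((μ : ℂ) * x + (1 - (μ : ℂ)) * y))
      * ((1 + (starRingEnd ℂ) a * (((N * μ : ℝ) : ℂ) * B)) * (1 - (starRingEnd ℂ) a * b))
      = 0 := by
    linear_combination (1 + (r : ℂ) ^ 2 * (μ : ℂ) * (1 - (starRingEnd ℂ) x * y))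
      * (1 - (starRingEnd ℂ) a * b) * hlin + hH
  rcases mul_eq_zero.mp h1 with h | h
  · linear_combination h
  · exact absurd h (mul_ne_zero hu1 hd2)

set_option maxHeartbeats 1000000 in
/-- For distinct points `x, y` of the unit circle, the hyperbolic midpoint of `rx` and
`ry` (the point of the disk equidistant from them and lying on the hyperbolic segment
joining them) converges, as `r → 1⁻`, to a point of the open unit disk. -/
theorem hyperbolic_midpoint_tendsto_interior
    (x y : ℂ) (hx : ‖x‖ = 1) (hy : ‖y‖ = 1) (hxy : x ≠ y)
    (m : ℝ → ℂ)
    (hm : ∀ r ∈ Ioo (0 : ℝ) 1,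
      ‖m r‖ < 1 ∧
      poincareDist (r * x) (m r) = poincareDist (m r) (r * y) ∧
      poincareDist (r * x) (m r) + poincareDist (m r) (r * y)
        = poincareDist (r * x) (r * y)) :
    ∃ L : ℂ, ‖L‖ < 1 ∧ Tendsto m (𝓝[<] (1 : ℝ)) (𝓝 L) := by
  have hxc : x * (starRingEnd ℂ) x = 1 := by
    rw [Complex.mul_conj, Complex.normSq_eq_norm_sq, hx]; norm_num
  have hyc : y * (starRingEnd ℂ) y = 1 := by
    rw [Complex.mul_conj, Complex.normSq_eq_norm_sq, hy]; norm_num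
  set w : ℂ := (starRingEnd ℂ) x * y with hw_def
  have habsw : ‖w‖ = 1 := by
    rw [hw_def, norm_mul, Complex.norm_conj, hx, hy]; norm_num
  have hwne : w ≠ 1 := by
    intro h
    apply hxy
    have h2 : x = y := by
      calc x = x * 1 := (mul_one x).symm
        _ = x * w := by rw [h]
        _ = (x * (starRingEnd ℂ) x) * y := by rw [hw_def]; ring
        _ = y := by rw [hxc, one_mul]
    exact h2
  have hwre : w.re < 1 := by
    rcases lt_or_eq_of_le (by calc w.re ≤ ‖w‖ := Complex.re_le_norm w
      _ = 1 := habsw) with h | h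
    · exact h
    · exfalso
      apply hwne
      have := eq_re_of_re_eq_abs (v := w) (by rw [habsw, h])
      rw [h] at this
      simpa using this
  have hxyne : x - y ≠ 0 := sub_ne_zero.mpr hxy
  have hxyabs : 0 < ‖x - y‖ := norm_pos_iff.mpr hxyne
  set β : ℝ := (‖x - y‖)⁻¹ with hβ_def
  have hβ0 : 0 < β := inv_pos.mpr hxyabs
  set den : ℂ := 1 + (β : ℂ) * (1 - w) with hden_def
  set num : ℂ := (β : ℂ) * x + (1 - (β : ℂ)) * y with hnum_def
  have hdenre : den.re = 1 + β * (1 - w).re := by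
    rw [hden_def, Complex.add_re, Complex.one_re, Complex.re_ofReal_mul]
  have hsubre : (1 - w).re = 1 - w.re := by simp [Complex.sub_re]
  have hden0 : den ≠ 0 := by
    intro h
    rw [h] at hdenre
    simp only [Complex.zero_re] at hdenre
    rw [hsubre] at hdenre
    nlinarith only [hdenre, hβ0, hwre]
  set L : ℂ := num / den with hL_def
  -- |L| < 1
  have h_add : w + x * (starRingEnd ℂ) y = 2 * ((w.re : ℝ) : ℂ) := by
    have h := Complex.add_conj w
    rw [show (starRingEnd ℂ) w = x * (starRingEnd ℂ) y by
      rw [hw_def, map_mul, Complex.conj_conj]] at h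
    push_cast at h
    exact h
  have hnormdiff : Complex.normSq den - Complex.normSq num = 4 * β * (1 - w.re) := by
    have hc : ((Complex.normSq den - Complex.normSq num : ℝ) : ℂ)
        = ((4 * β * (1 - w.re) : ℝ) : ℂ) := by
      push_cast
      simp only [← Complex.mul_conj]
      rw [hden_def, hnum_def, hw_def]
      simp only [map_add, map_sub, map_mul, map_one, Complex.conj_conj, Complex.conj_ofReal]
      rw [← hw_def]
      linear_combination ((β : ℂ) ^ 2 * (y * (starRingEnd ℂ) y) - (β : ℂ) ^ 2) * hxc
        + (2 * (β : ℂ) - 1) * hyc + (-2 * (β : ℂ)) * h_add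
    exact_mod_cast hc
  have habsL : ‖L‖ < 1 := by
    rw [hL_def, norm_div, div_lt_one (norm_pos_iff.mpr hden0)]
    have h1 : Complex.normSq num < Complex.normSq den := by
      nlinarith only [hnormdiff, hβ0, hwre]
    have e1 := Complex.sq_norm num
    have e2 := Complex.sq_norm den
    nlinarith only [e1, e2, h1, norm_nonneg num, norm_nonneg den]
  -- the explicit formula
  set μf : ℝ → ℝ := fun r =>
    (‖1 - (r : ℂ) ^ 2 * w‖ - (1 - r ^ 2)) / (r ^ 2 * (‖x - y‖) ^ 2)
    with hμf_def
  set G : ℝ → ℂ := fun r =>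
    ((r : ℂ) * ((μf r : ℂ) * x + (1 - (μf r : ℂ)) * y))
      / (1 + (r : ℂ) ^ 2 * (μf r : ℂ) * (1 - w)) with hG_def
  -- m agrees with G on Ioo 0 1
  have hagree : ∀ r ∈ Ioo (0 : ℝ) 1, m r = G r := by
    intro r hr
    obtain ⟨hr0, hr1⟩ := hr
    obtain ⟨hm1, hm2, hm3⟩ := hm r ⟨hr0, hr1⟩
    have hpos2 : (0 : ℝ) < r ^ 2 * (‖x - y‖) ^ 2 := by positivity
    have hμdef : μf r * (r ^ 2 * (‖x - y‖) ^ 2)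
        = ‖1 - (r : ℂ) ^ 2 * ((starRingEnd ℂ) x * y)‖ - (1 - r ^ 2) := by
      rw [hμf_def]
      exact div_mul_cancel₀ _ (ne_of_gt hpos2)
    have hform := midpoint_formula x y hx hy hxy r hr0 hr1 (m r) hm1
      (by exact_mod_cast hm2) (by exact_mod_cast hm3) (μf r) hμdef
    -- μf r ≥ 0
    have hμ0 : 0 ≤ μf r := by
      have h1 : ‖(r : ℂ) ^ 2 * w‖ = r ^ 2 := by
        rw [norm_mul, norm_pow, Complex.norm_real, Real.norm_eq_abs, habsw, abs_of_pos hr0]; ring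
      have h2 := norm_add_le (1 - (r : ℂ) ^ 2 * w) ((r : ℂ) ^ 2 * w)
      rw [sub_add_cancel, norm_one, h1] at h2
      rw [hμf_def]
      apply div_nonneg _ (le_of_lt hpos2)
      linarith
    -- denominator nonzero
    have hQre : (1 + (r : ℂ) ^ 2 * (μf r : ℂ) * (1 - w)).re = 1 + r ^ 2 * μf r * (1 - w.re) := by
      have : (r : ℂ) ^ 2 * (μf r : ℂ) * (1 - w) = ((r ^ 2 * μf r : ℝ) : ℂ) * (1 - w) := by
        push_cast; ring
      rw [this, Complex.add_re, Complex.one_re, Complex.re_ofReal_mul, hsubre]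
    have hQ0 : (1 + (r : ℂ) ^ 2 * (μf r : ℂ) * (1 - w)) ≠ 0 := by
      intro h
      rw [h] at hQre
      simp only [Complex.zero_re] at hQre
      linarith only [hQre,
        mul_nonneg (mul_nonneg (sq_nonneg r) hμ0)
          (le_of_lt (by linarith only [hwre] : (0:ℝ) < 1 - w.re))]
    rw [hG_def]
    exact (eq_div_iff hQ0).mpr hform
  -- continuity of G at 1
  have hμf1 : μf 1 = β := by
    have h1w : (1 : ℂ) - w = (starRingEnd ℂ) x * (x - y) := by
      rw [hw_def, mul_sub]
      rw [show (starRingEnd ℂ) x * x = 1 by rw [mul_comm]; exact hxc]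
    have habs1w : ‖1 - w‖ = ‖x - y‖ := by
      rw [h1w, norm_mul, Complex.norm_conj, hx, one_mul]
    rw [hμf_def]
    simp only [Complex.ofReal_one, one_pow, one_mul]
    norm_num
    rw [habs1w, hβ_def, sq]
    rw [div_mul_cancel_left₀ (ne_of_gt hxyabs)]
  have hc1 : Continuous (fun r : ℝ => ‖1 - (r : ℂ) ^ 2 * w‖) :=
    continuous_norm.comp
      (continuous_const.sub ((Complex.continuous_ofReal.pow 2).mul continuous_const))
  have hcontμ : ContinuousAt μf 1 := by
    apply ContinuousAt.div
    · exact (hc1.sub (by fun_prop)).continuousAt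
    · fun_prop
    · have h : (0:ℝ) < (1:ℝ) ^ 2 * ‖x - y‖ ^ 2 := by positivity
      simpa using h.ne'
  have hcμc : ContinuousAt (fun r : ℝ => ((μf r : ℝ) : ℂ)) 1 :=
    Complex.continuous_ofReal.continuousAt.comp hcontμ
  have hden1G : (1:ℂ) + ((1:ℝ) : ℂ) ^ 2 * ((μf 1 : ℝ) : ℂ) * (1 - w) = den := by
    rw [hμf1, hden_def]; push_cast; ring
  have hcontG : ContinuousAt G 1 := by
    apply ContinuousAt.div
    · exact Complex.continuous_ofReal.continuousAt.mul
        ((hcμc.mul continuousAt_const).add ((continuousAt_const.sub hcμc).mul continuousAt_const))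
    · exact continuousAt_const.add
        (((Complex.continuous_ofReal.continuousAt.pow 2).mul hcμc).mul continuousAt_const)
    · show (1:ℂ) + ((1:ℝ) : ℂ) ^ 2 * ((μf 1 : ℝ) : ℂ) * (1 - w) ≠ 0
      rw [hden1G]; exact hden0
  have hG1 : G 1 = L := by
    rw [hG_def]
    show ((1:ℝ) : ℂ) * (((μf 1 : ℝ) : ℂ) * x + (1 - ((μf 1 : ℝ) : ℂ)) * y)
        / ((1:ℂ) + ((1:ℝ) : ℂ) ^ 2 * ((μf 1 : ℝ) : ℂ) * (1 - w)) = L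
    rw [hden1G, hμf1, hL_def, hnum_def]
    push_cast
    ring_nf
  have htend : Tendsto G (𝓝[<] (1:ℝ)) (𝓝 L) := by
    have h := hcontG.tendsto
    rw [hG1] at h
    exact h.mono_left nhdsWithin_le_nhds
  have hev : m =ᶠ[𝓝[<] (1:ℝ)] G := by
    have hIoo : Ioo (0:ℝ) 1 ∈ 𝓝[<] (1:ℝ) := Ioo_mem_nhdsLT_of_mem ⟨zero_lt_one, le_refl 1⟩
    filter_upwards [hIoo] with r hr using hagree r hr
  exact ⟨L, habsL, htend.congr' hev.symm⟩
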